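/- Let V be a finite set of N nodes partitioned into two sensitive groups S₀ and S₁ of sizes N₀ ≥ 1 and N₁ ≥ 1, and fix α > 0. For F : V → ℝ^d, define the MMD loss ℓ_MMD(F) = (1/N₀²)·Σ_{i∈S₀} Σ_{j∈S₀} k(F_i, F_j) + (1/N₁²)·Σ_{i∈S₁} Σ_{j∈S₁} k(F_i, F_j) − (2/(N₀N₁))·Σ_{i∈S₀} Σ_{j∈S₁} k(F_i, F_j). Define P(F) ∈ ℝ^{V×V} by: for i ≠ j, P(F)_{ij} = −k(F_i, F_j)/N_t² if i and j both lie in group S_t (t ∈ {0,1}), and P(F)_{ij} = k(F_i, F_j)/(N₀N₁) if i and j lie in different groups; P(F)_{ii} = −Σ_{m≠i} P(F)_{im}. Then for every node i, the negative gradient of ℓ_MMD with respect to the row F_i satisfies −∇_{F_i} ℓ_MMD(F) = 4α·Σ_{j∈V} P(F)_{ij}·F_j. -/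

import Mathlib

open Finset

/-- RBF kernel `k(x,y) = exp(-α‖x-y‖²)`. -/
noncomputable def ker {d : ℕ} (α : ℝ) (x y : EuclideanSpace ℝ (Fin d)) : ℝ :=
  Real.exp (-α * ‖x - y‖ ^ 2)

/-- The sensitive group `S_b`, where group membership is given by `grp`
(`false` encodes `S₀` and `true` encodes `S₁`). -/
def sgrp {V : Type*} [Fintype V] (grp : V → Bool) (b : Bool) : Finset V :=
  Finset.univ.filter (fun i => grp i = b)

/-- The MMD loss
`ℓ_MMD(F) = (1/N₀²)·Σ_{i∈S₀}Σ_{j∈S₀} k(F_i,F_j) + (1/N₁²)·Σ_{i∈S₁}Σ_{j∈S₁} k(F_i,F_j)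
           − (2/(N₀N₁))·Σ_{i∈S₀}Σ_{j∈S₁} k(F_i,F_j)`. -/
noncomputable def lMMD {V : Type*} [Fintype V] {d : ℕ} (α : ℝ) (grp : V → Bool)
    (F : V → EuclideanSpace ℝ (Fin d)) : ℝ :=
  (1 / ((sgrp grp false).card : ℝ) ^ 2) *
      ∑ i ∈ sgrp grp false, ∑ j ∈ sgrp grp false, ker α (F i) (F j)
    + (1 / ((sgrp grp true).card : ℝ) ^ 2) *
        ∑ i ∈ sgrp grp true, ∑ j ∈ sgrp grp true, ker α (F i) (F j)
    - (2 / (((sgrp grp false).card : ℝ) * ((sgrp grp true).card : ℝ))) *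
        ∑ i ∈ sgrp grp false, ∑ j ∈ sgrp grp true, ker α (F i) (F j)

/-- Off-diagonal entries of `P(F)`: `−k(F_i,F_j)/N_t²` if `i, j` both lie in group `S_t`, and
`k(F_i,F_j)/(N₀N₁)` if they lie in different groups. -/
noncomputable def Poff {V : Type*} [Fintype V] {d : ℕ} (α : ℝ) (grp : V → Bool)
    (F : V → EuclideanSpace ℝ (Fin d)) (i j : V) : ℝ :=
  if grp i = grp j then -ker α (F i) (F j) / ((sgrp grp (grp i)).card : ℝ) ^ 2
  else ker α (F i) (F j) / (((sgrp grp false).card : ℝ) * ((sgrp grp true).card : ℝ))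

/-- The matrix `P(F)`: off-diagonal entries given by `Poff` and diagonal entries
`P(F)_{ii} = −Σ_{m≠i} P(F)_{im}`. -/
noncomputable def Pmat {V : Type*} [Fintype V] [DecidableEq V] {d : ℕ} (α : ℝ)
    (grp : V → Bool) (F : V → EuclideanSpace ℝ (Fin d)) (i j : V) : ℝ :=
  if i = j then -∑ m ∈ Finset.univ.erase i, Poff α grp F i m
  else Poff α grp F i j

section grad
variable {E : Type*} [NormedAddCommGroup E] [InnerProductSpace ℝ E] [CompleteSpace E]

lemma myGradAdd {f g : E → ℝ} {f' g' : E} {x : E} (hf : HasGradientAt f f' x)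
    (hg : HasGradientAt g g' x) : HasGradientAt (fun y => f y + g y) (f' + g') x := by
  rw [hasGradientAt_iff_hasFDerivAt, map_add]; exact hf.hasFDerivAt.add hg.hasFDerivAt

lemma myGradSub {f g : E → ℝ} {f' g' : E} {x : E} (hf : HasGradientAt f f' x)
    (hg : HasGradientAt g g' x) : HasGradientAt (fun y => f y - g y) (f' - g') x := by
  rw [hasGradientAt_iff_hasFDerivAt, map_sub]; exact hf.hasFDerivAt.sub hg.hasFDerivAt

lemma myGradConstMul {f : E → ℝ} {f' : E} {x : E} (c : ℝ) (hf : HasGradientAt f f' x) :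
    HasGradientAt (fun y => c * f y) (c • f') x := by
  rw [hasGradientAt_iff_hasFDerivAt, map_smul]
  exact hf.hasFDerivAt.const_mul c

lemma myGradSum {ι : Type*} (s : Finset ι) {f : ι → E → ℝ} {g : ι → E} {x : E}
    (h : ∀ j ∈ s, HasGradientAt (f j) (g j) x) :
    HasGradientAt (fun y => ∑ j ∈ s, f j y) (∑ j ∈ s, g j) x := by
  rw [hasGradientAt_iff_hasFDerivAt, map_sum]
  exact HasFDerivAt.fun_sum fun j hj => (h j hj).hasFDerivAt

end grad

lemma hasGradientAt_ker {d : ℕ} (α : ℝ) (y x : EuclideanSpace ℝ (Fin d)) :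
    HasGradientAt (fun z => ker α z y) ((-(2*α) * ker α x y) • (x - y)) x := by
  rw [hasGradientAt_iff_hasFDerivAt]
  have h1 : HasFDerivAt (fun z : EuclideanSpace ℝ (Fin d) => z - y)
      (ContinuousLinearMap.id ℝ _) x := (hasFDerivAt_id x).sub_const y
  have h4 := ((h1.norm_sq).const_mul (-α)).exp
  convert h4 using 1
  · rfl
  · rfl
  ext z
  simp [ker, InnerProductSpace.toDual_apply_apply, real_inner_smul_left, Real.exp_ne_zero]
  ring

lemma ker_comm {d : ℕ} (α : ℝ) (x y : EuclideanSpace ℝ (Fin d)) : ker α x y = ker α y x := by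
  simp [ker, norm_sub_rev]

/-- For every node `i`, the negative gradient of `ℓ_MMD` with respect to the row `F_i`
satisfies `−∇_{F_i} ℓ_MMD(F) = 4α·Σ_{j∈V} P(F)_{ij}·F_j`. -/
theorem stmt3 {V : Type*} [Fintype V] [DecidableEq V] {d : ℕ} {α : ℝ} (hα : 0 < α)
    (grp : V → Bool) (N₀ N₁ : ℕ)
    (hcard0 : (sgrp grp false).card = N₀) (hcard1 : (sgrp grp true).card = N₁)
    (hN₀ : 1 ≤ N₀) (hN₁ : 1 ≤ N₁)
    (F : V → EuclideanSpace ℝ (Fin d)) (i : V) :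
    HasGradientAt (fun x : EuclideanSpace ℝ (Fin d) => lMMD α grp (Function.update F i x))
      (-((4 * α) • ∑ j : V, Pmat α grp F i j • F j)) (F i) := by
  classical
  set w : V → EuclideanSpace ℝ (Fin d) :=
    fun b => (-(2*α) * ker α (F i) (F b)) • (F i - F b) with hw
  have hwi : w i = 0 := by simp [hw]
  set G : V → V → EuclideanSpace ℝ (Fin d) :=
    fun a b => (if a = i then w b else 0) + (if b = i then w a else 0) with hG
  set u : V → EuclideanSpace ℝ (Fin d) := fun b => ker α (F i) (F b) • (F i - F b) with hu
  -- per-term gradients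
  have hterm : ∀ a b : V, HasGradientAt
      (fun x => ker α (Function.update F i x a) (Function.update F i x b)) (G a b) (F i) := by
    intro a b
    by_cases ha : a = i <;> by_cases hb : b = i
    · have hfun : (fun x : EuclideanSpace ℝ (Fin d) =>
          ker α (Function.update F i x a) (Function.update F i x b)) = fun _ => (1:ℝ) := by
        funext x; rw [ha, hb]; simp [ker]
      have hGab : G a b = 0 := by simp [hG, ha, hb, hwi]
      rw [hfun, hGab]; exact hasGradientAt_const _ _
    · have hfun : (fun x : EuclideanSpace ℝ (Fin d) =>
          ker α (Function.update F i x a) (Function.update F i x b)) =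
          fun x => ker α x (F b) := by
        funext x; simp [ha, hb, Function.update_apply]
      have hGab : G a b = (-(2*α) * ker α (F i) (F b)) • (F i - F b) := by
        simp [hG, ha, hb, hw]
      rw [hfun, hGab]; exact hasGradientAt_ker α (F b) (F i)
    · have hfun : (fun x : EuclideanSpace ℝ (Fin d) =>
          ker α (Function.update F i x a) (Function.update F i x b)) =
          fun x => ker α x (F a) := by
        funext x; simp [ha, hb, Function.update_apply, ker_comm]
      have hGab : G a b = (-(2*α) * ker α (F i) (F a)) • (F i - F a) := by
        simp [hG, ha, hb, hw]
      rw [hfun, hGab]; exact hasGradientAt_ker α (F a) (F i)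
    · have hfun : (fun x : EuclideanSpace ℝ (Fin d) =>
          ker α (Function.update F i x a) (Function.update F i x b)) =
          fun _ => ker α (F a) (F b) := by
        funext x; simp [ha, hb, Function.update_apply]
      have hGab : G a b = 0 := by simp [hG, ha, hb]
      rw [hfun, hGab]; exact hasGradientAt_const _ _
  have hDD : ∀ A B : Finset V, HasGradientAt
      (fun x => ∑ a ∈ A, ∑ b ∈ B, ker α (Function.update F i x a) (Function.update F i x b))
      (∑ a ∈ A, ∑ b ∈ B, G a b) (F i) :=
    fun A B => myGradSum A (fun a _ => myGradSum B (fun b _ => hterm a b))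
  have hmain : HasGradientAt
      (fun x : EuclideanSpace ℝ (Fin d) => lMMD α grp (Function.update F i x))
      ((1 / ((sgrp grp false).card : ℝ) ^ 2) • ∑ a ∈ sgrp grp false, ∑ b ∈ sgrp grp false, G a b
        + (1 / ((sgrp grp true).card : ℝ) ^ 2) • ∑ a ∈ sgrp grp true, ∑ b ∈ sgrp grp true, G a b
        - (2 / (((sgrp grp false).card : ℝ) * ((sgrp grp true).card : ℝ))) •
            ∑ a ∈ sgrp grp false, ∑ b ∈ sgrp grp true, G a b) (F i) := by
    unfold lMMD
    exact myGradSub (myGradAdd (myGradConstMul _ (hDD _ _)) (myGradConstMul _ (hDD _ _)))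
      (myGradConstMul _ (hDD _ _))
  -- value of double sums of G
  have hD : ∀ A B : Finset V, ∑ a ∈ A, ∑ b ∈ B, G a b
      = (if i ∈ A then ∑ b ∈ B, w b else 0) + (if i ∈ B then ∑ a ∈ A, w a else 0) := by
    intro A B
    simp only [hG, Finset.sum_add_distrib]
    congr 1
    · rw [Finset.sum_comm]
      rw [show (∑ b ∈ B, ∑ a ∈ A, if a = i then w b else 0)
          = ∑ b ∈ B, (if i ∈ A then w b else 0) from
        Finset.sum_congr rfl fun b _ => Finset.sum_ite_eq' A i (fun _ => w b)]
      split_ifs <;> simp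
    · rw [show (∑ a ∈ A, ∑ b ∈ B, if b = i then w a else 0)
          = ∑ a ∈ A, (if i ∈ B then w a else 0) from
        Finset.sum_congr rfl fun a _ => Finset.sum_ite_eq' B i (fun _ => w a)]
      split_ifs <;> simp
  -- target rewrite
  have htarget : (∑ j : V, Pmat α grp F i j • F j)
      = ∑ j : V, Poff α grp F i j • (F j - F i) := by
    rw [← Finset.add_sum_erase _ (fun j => Pmat α grp F i j • F j) (Finset.mem_univ i),
      ← Finset.add_sum_erase _ (fun j => Poff α grp F i j • (F j - F i)) (Finset.mem_univ i)]
    have h1 : Pmat α grp F i i = -∑ m ∈ Finset.univ.erase i, Poff α grp F i m := by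
      simp [Pmat]
    have h2 : ∑ j ∈ Finset.univ.erase i, Pmat α grp F i j • F j
        = ∑ j ∈ Finset.univ.erase i, Poff α grp F i j • F j := by
      refine Finset.sum_congr rfl fun j hj => ?_
      have hij : i ≠ j := (Finset.ne_of_mem_erase hj).symm
      simp [Pmat, hij]
    rw [h1, h2]
    simp only [sub_self, smul_zero, zero_add, smul_sub, Finset.sum_sub_distrib, neg_smul,
      Finset.sum_smul]
    abel
  -- split sums over groups
  have hsplit : ∀ f : V → EuclideanSpace ℝ (Fin d),
      ∑ j : V, f j = ∑ j ∈ sgrp grp false, f j + ∑ j ∈ sgrp grp true, f j := by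
    intro f
    have h := Finset.sum_filter_add_sum_filter_not Finset.univ (fun j => grp j = false) f
    have hft : Finset.univ.filter (fun j => ¬ grp j = false) = sgrp grp true := by
      ext j; simp [sgrp]
    rw [hft] at h
    exact h.symm
  -- rewrite sums of w into sums of u
  have hW : ∀ A : Finset V, ∑ j ∈ A, w j = (-(2*α)) • ∑ j ∈ A, u j := by
    intro A
    rw [Finset.smul_sum]
    exact Finset.sum_congr rfl fun j _ => by rw [hw, hu]; exact mul_smul _ _ _
  -- now finish
  have hfin : ((1 / ((sgrp grp false).card : ℝ) ^ 2) •
        ∑ a ∈ sgrp grp false, ∑ b ∈ sgrp grp false, G a b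
      + (1 / ((sgrp grp true).card : ℝ) ^ 2) •
        ∑ a ∈ sgrp grp true, ∑ b ∈ sgrp grp true, G a b
      - (2 / (((sgrp grp false).card : ℝ) * ((sgrp grp true).card : ℝ))) •
        ∑ a ∈ sgrp grp false, ∑ b ∈ sgrp grp true, G a b)
      = -((4 * α) • ∑ j : V, Pmat α grp F i j • F j) := by
    rw [hD, hD, hD, htarget, hsplit (fun j => Poff α grp F i j • (F j - F i))]
    cases hgi : grp i with
    | false =>
      have hiSf : i ∈ sgrp grp false := by simp [sgrp, hgi]
      have hiSt : i ∉ sgrp grp true := by simp [sgrp, hgi]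
      have hQf : ∑ j ∈ sgrp grp false, Poff α grp F i j • (F j - F i)
          = ((1 / ((sgrp grp false).card : ℝ) ^ 2)) • ∑ j ∈ sgrp grp false, u j := by
        rw [Finset.smul_sum]
        refine Finset.sum_congr rfl fun j hj => ?_
        have hgj : grp j = false := by simpa [sgrp] using hj
        have hP : Poff α grp F i j = -ker α (F i) (F j) / ((sgrp grp false).card : ℝ) ^ 2 := by
          rw [Poff, if_pos (by rw [hgi, hgj]), hgi]
        rw [hu, hP]
        match_scalars <;> ring
      have hQt : ∑ j ∈ sgrp grp true, Poff α grp F i j • (F j - F i)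
          = (-(1 / (((sgrp grp false).card : ℝ) * ((sgrp grp true).card : ℝ)))) •
            ∑ j ∈ sgrp grp true, u j := by
        rw [Finset.smul_sum]
        refine Finset.sum_congr rfl fun j hj => ?_
        have hgj : grp j = true := by simpa [sgrp] using hj
        have hP : Poff α grp F i j
            = ker α (F i) (F j) / (((sgrp grp false).card : ℝ) * ((sgrp grp true).card : ℝ)) := by
          rw [Poff, if_neg (by rw [hgi, hgj]; simp)]
        rw [hu, hP]
        match_scalars <;> ring
      simp only [if_pos hiSf, if_neg hiSt]
      simp only [hW]
      rw [hQf, hQt]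
      match_scalars <;> ring
    | true =>
      have hiSf : i ∉ sgrp grp false := by simp [sgrp, hgi]
      have hiSt : i ∈ sgrp grp true := by simp [sgrp, hgi]
      have hQf : ∑ j ∈ sgrp grp false, Poff α grp F i j • (F j - F i)
          = (-(1 / (((sgrp grp false).card : ℝ) * ((sgrp grp true).card : ℝ)))) •
            ∑ j ∈ sgrp grp false, u j := by
        rw [Finset.smul_sum]
        refine Finset.sum_congr rfl fun j hj => ?_
        have hgj : grp j = false := by simpa [sgrp] using hj
        have hP : Poff α grp F i j
            = ker α (F i) (F j) / (((sgrp grp false).card : ℝ) * ((sgrp grp true).card : ℝ)) := by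
          rw [Poff, if_neg (by rw [hgi, hgj]; simp)]
        rw [hu, hP]
        match_scalars <;> ring
      have hQt : ∑ j ∈ sgrp grp true, Poff α grp F i j • (F j - F i)
          = ((1 / ((sgrp grp true).card : ℝ) ^ 2)) • ∑ j ∈ sgrp grp true, u j := by
        rw [Finset.smul_sum]
        refine Finset.sum_congr rfl fun j hj => ?_
        have hgj : grp j = true := by simpa [sgrp] using hj
        have hP : Poff α grp F i j = -ker α (F i) (F j) / ((sgrp grp true).card : ℝ) ^ 2 := by
          rw [Poff, if_pos (by rw [hgi, hgj]), hgi]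
        rw [hu, hP]
        match_scalars <;> ring
      simp only [if_pos hiSt, if_neg hiSf]
      simp only [hW]
      rw [hQf, hQt]
      match_scalars <;> ring
  rw [← hfin]
  exact hmain
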